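/- Let (X,d,μ) satisfy ε-BM(n−1,n) with ε ≥ 0 and n ∈ (1,∞). Then for every r ∈ (0, π), α_{(X,d,μ)}(r) ≤ exp(−n·[1 + 2^{−1/n} − 2·(cos(r/2))^{(n−1)/n}]). -/

import Mathlib

open MeasureTheory ENNReal

/-- The set of `ε`-approximated `t`-intermediate points between `A₀` and `A₁`. -/
def interSet {X : Type*} [PseudoMetricSpace X] (ε t : ℝ) (A₀ A₁ : Set X) : Set X :=
  {x | ∃ x₀ ∈ A₀, ∃ x₁ ∈ A₁,
    |dist x₀ x - t * dist x₀ x₁| ≤ ε ∧ |dist x x₁ - (1 - t) * dist x₀ x₁| ≤ ε}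

/-- The sine distortion coefficient `(sin(t·d)/(t·sin d))^{(n-1)/n}`, set to `+∞` when `d ≥ π`. -/
noncomputable def distCoef (n t d : ℝ) : ℝ≥0∞ :=
  if d < Real.pi then
    ENNReal.ofReal ((Real.sin (t * d) / (t * Real.sin d)) ^ ((n - 1) / n))
  else ⊤

/-- The `ε`-approximated Brunn–Minkowski inequality `ε-BM(n-1, n)`. -/
def BMCond {X : Type*} [PseudoMetricSpace X] [MeasurableSpace X]
    (μ : Measure X) (ε n : ℝ) : Prop :=
  ∀ A₀ A₁ : Set X, MeasurableSet A₀ → MeasurableSet A₁ → A₀.Nonempty → A₁.Nonempty →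
    ∀ t ∈ Set.Ioo (0 : ℝ) 1,
      ENNReal.ofReal (1 - t) * (⨅ x₀ ∈ A₀, ⨅ x₁ ∈ A₁, distCoef n (1 - t) (dist x₀ x₁)) *
          μ A₀ ^ (1 / n)
        + ENNReal.ofReal t * (⨅ x₀ ∈ A₀, ⨅ x₁ ∈ A₁, distCoef n t (dist x₀ x₁)) *
          μ A₁ ^ (1 / n)
      ≤ μ (interSet ε t A₀ A₁) ^ (1 / n)

/-- The concentration function `α(r) = sup {1 - μ(A_r) : μ(A) ≥ 1/2}`. -/
noncomputable def concFn {X : Type*} [PseudoMetricSpace X] [MeasurableSpace X]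
    (μ : Measure X) (r : ℝ) : ℝ :=
  sSup {v : ℝ | ∃ A : Set X, MeasurableSet A ∧ 1 / 2 ≤ μ A ∧
    v = 1 - (μ (Metric.thickening r A)).toReal}

theorem refined_concentration (X : Type*) [MetricSpace X] [CompleteSpace X]
    [TopologicalSpace.SeparableSpace X] [MeasurableSpace X] [BorelSpace X]
    (μ : Measure X) [IsProbabilityMeasure μ] [μ.IsOpenPosMeasure]
    (ε n : ℝ) (hε : 0 ≤ ε) (hn : 1 < n) (hBM : BMCond μ ε n) :
    ∀ r ∈ Set.Ioo 0 Real.pi,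
      concFn μ r ≤
        Real.exp (-n * (1 + (2 : ℝ) ^ (-(1 / n)) - 2 * Real.cos (r / 2) ^ ((n - 1) / n))) := by
  rintro r ⟨hr0, hrπ⟩
  have hπ := Real.pi_pos
  set c := Real.cos (r / 2) with hc_def
  set e := (n - 1) / n with he_def
  have hn0 : (0 : ℝ) < n := by linarith
  have he0 : 0 ≤ e := by
    apply div_nonneg <;> linarith
  have hc0 : 0 < c := Real.cos_pos_of_mem_Ioo ⟨by linarith, by linarith⟩
  have hce : 0 < c ^ e := Real.rpow_pos_of_pos hc0 e
  apply Real.sSup_le _ (Real.exp_pos _).le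
  rintro v ⟨A, hA, hμA, rfl⟩
  set T := Metric.thickening r A with hT_def
  set B := Tᶜ with hB_def
  have hTmeas : MeasurableSet T := Metric.isOpen_thickening.measurableSet
  have hv : 1 - (μ T).toReal = (μ B).toReal := by
    rw [hB_def, prob_compl_eq_one_sub hTmeas, ENNReal.toReal_sub_of_le prob_le_one one_ne_top]
    simp
  rw [hv]
  set b := (μ B).toReal with hb_def
  have hb0 : 0 ≤ b := ENNReal.toReal_nonneg
  rcases eq_or_lt_of_le hb0 with hb | hb
  · rw [← hb]; exact (Real.exp_pos _).le
  -- B is nonempty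
  have hμB0 : μ B ≠ 0 := by
    intro h
    rw [hb_def, h] at hb
    simp at hb
  have hBne : B.Nonempty := nonempty_of_measure_ne_zero hμB0
  have hAne : A.Nonempty := by
    apply nonempty_of_measure_ne_zero
    intro h
    rw [h] at hμA
    simp at hμA
  have hBM' := hBM A B hA hTmeas.compl hAne hBne (1 / 2) ⟨by norm_num, by norm_num⟩
  rw [show (1 : ℝ) - 1 / 2 = 1 / 2 by norm_num] at hBM'
  -- lower bound for the distortion coefficient
  have hInf : ENNReal.ofReal (c⁻¹ ^ e) ≤
      ⨅ x₀ ∈ A, ⨅ x₁ ∈ B, distCoef n (1 / 2) (dist x₀ x₁) := by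
    refine le_iInf₂ fun x₀ h₀ => le_iInf₂ fun x₁ h₁ => ?_
    have hdist : r ≤ dist x₀ x₁ := by
      have : x₁ ∉ T := h₁
      rw [hT_def, Metric.mem_thickening_iff] at this
      push_neg at this
      have := this x₀ h₀
      rw [dist_comm] at this
      linarith
    set d := dist x₀ x₁ with hd_def
    unfold distCoef
    split_ifs with hdπ
    · apply ENNReal.ofReal_le_ofReal
      have hd2 : 0 < Real.cos (d / 2) := Real.cos_pos_of_mem_Ioo ⟨by linarith, by linarith⟩
      have hsd : 0 < Real.sin (d / 2) :=
        Real.sin_pos_of_pos_of_lt_pi (by linarith) (by linarith)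
      have hsin : Real.sin (1 / 2 * d) / (1 / 2 * Real.sin d) = (Real.cos (d / 2))⁻¹ := by
        have h2 : Real.sin d = 2 * Real.sin (d / 2) * Real.cos (d / 2) := by
          rw [show d = 2 * (d / 2) by ring, Real.sin_two_mul]
          ring_nf
        rw [show (1 : ℝ) / 2 * d = d / 2 by ring, h2]
        field_simp
      rw [hsin]
      apply Real.rpow_le_rpow (by positivity) _ he0
      apply inv_anti₀ hd2
      exact Real.cos_le_cos_of_nonneg_of_le_pi (by linarith) (by linarith) (by linarith)
    · exact le_top
  -- the key ENNReal inequality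
  have hkey : ENNReal.ofReal (1 / 2) * ENNReal.ofReal (c⁻¹ ^ e) *
      ((1 / 2 : ℝ≥0∞) ^ (1 / n) + μ B ^ (1 / n)) ≤ 1 := by
    calc ENNReal.ofReal (1 / 2) * ENNReal.ofReal (c⁻¹ ^ e) *
        ((1 / 2 : ℝ≥0∞) ^ (1 / n) + μ B ^ (1 / n))
        = ENNReal.ofReal (1 / 2) * ENNReal.ofReal (c⁻¹ ^ e) * (1 / 2 : ℝ≥0∞) ^ (1 / n)
          + ENNReal.ofReal (1 / 2) * ENNReal.ofReal (c⁻¹ ^ e) * μ B ^ (1 / n) := by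
          rw [mul_add]
      _ ≤ ENNReal.ofReal (1 / 2) *
            (⨅ x₀ ∈ A, ⨅ x₁ ∈ B, distCoef n (1 / 2) (dist x₀ x₁)) * μ A ^ (1 / n)
          + ENNReal.ofReal (1 / 2) *
            (⨅ x₀ ∈ A, ⨅ x₁ ∈ B, distCoef n (1 / 2) (dist x₀ x₁)) * μ B ^ (1 / n) := by
          gcongr
      _ ≤ μ (interSet ε (1 / 2) A B) ^ (1 / n) := hBM'
      _ ≤ 1 := ENNReal.rpow_le_one prob_le_one (by positivity)
  -- convert to reals
  have hfin1 : (1 / 2 : ℝ≥0∞) ^ (1 / n : ℝ) ≠ ⊤ :=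
    ENNReal.rpow_ne_top_of_nonneg (by positivity) (by norm_num)
  have hfin2 : (μ B) ^ (1 / n : ℝ) ≠ ⊤ :=
    ENNReal.rpow_ne_top_of_nonneg (by positivity) (measure_ne_top μ B)
  have hreal : (1 / 2 : ℝ) * c⁻¹ ^ e * ((1 / 2 : ℝ) ^ (1 / n) + b ^ (1 / n)) ≤ 1 := by
    have := ENNReal.toReal_mono one_ne_top hkey
    rw [ENNReal.toReal_mul, ENNReal.toReal_mul, ENNReal.toReal_add hfin1 hfin2,
      ENNReal.toReal_ofReal (by norm_num), ENNReal.toReal_ofReal (by positivity),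
      ← ENNReal.toReal_rpow, ← ENNReal.toReal_rpow, ENNReal.toReal_one] at this
    simpa using this
  have hq : (1 / 2 : ℝ) ^ (1 / n : ℝ) = (2 : ℝ) ^ (-(1 / n) : ℝ) := by
    rw [Real.rpow_neg (by norm_num), one_div, Real.inv_rpow (by norm_num)]
  have hci : c⁻¹ ^ e = (c ^ e)⁻¹ := Real.inv_rpow hc0.le e
  rw [hq, hci] at hreal
  set q := (2 : ℝ) ^ (-(1 / n) : ℝ) with hq_def
  have hS : q + b ^ (1 / n : ℝ) ≤ 2 * c ^ e := by
    have h := mul_le_mul_of_nonneg_left hreal (by positivity : (0 : ℝ) ≤ 2 * c ^ e)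
    have h2 : 2 * c ^ e * (1 / 2 * (c ^ e)⁻¹ * (q + b ^ (1 / n : ℝ)))
        = q + b ^ (1 / n : ℝ) := by
      field_simp
    rw [h2] at h
    linarith
  have hbn : b ^ (1 / n : ℝ) ≤ 2 * c ^ e - q := by linarith
  have hlog : Real.log b * (1 / n) + 1 ≤ b ^ (1 / n : ℝ) := by
    rw [Real.rpow_def_of_pos hb]
    exact Real.add_one_le_exp _
  have hlogb : Real.log b ≤ -n * (1 + q - 2 * c ^ e) := by
    have h3 : Real.log b * (1 / n) ≤ 2 * c ^ e - q - 1 := by linarith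
    have h4 := mul_le_mul_of_nonneg_left h3 hn0.le
    have h5 : n * (Real.log b * (1 / n)) = Real.log b := by
      field_simp
    rw [h5] at h4
    linarith [h4]
  calc b = Real.exp (Real.log b) := (Real.exp_log hb).symm
    _ ≤ Real.exp (-n * (1 + q - 2 * c ^ e)) := Real.exp_le_exp.mpr hlogb
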